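/- Let γ̃ > 0 with γ̃ ≠ (n−1)/2. A brane scale function f is of class (B) with constant γ̃ (i.e. the limit lim_{τ→0⁻} f′(τ)²·e^{2γ̃f(τ)} exists and is a positive real number) if and only if γ̃ = n + ω₀ − 1 and ω₀ > −(n−1)/2. In that case the mass equals m̃ = (κ²/n²)·ρ₀², and the tension σ ∈ ℝ is arbitrary. -/

import Mathlib

open Filter Real Topology

private lemma expz {a : ℝ} (ha : 0 < a) :
    Tendsto (fun x : ℝ => Real.exp (a * x)) atBot (𝓝 0) :=
  Real.tendsto_exp_atBot.comp (tendsto_id.const_mul_atBot ha)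

private lemma expt {a : ℝ} (ha : a < 0) :
    Tendsto (fun x : ℝ => Real.exp (a * x)) atBot atTop :=
  Real.tendsto_exp_atTop.comp (tendsto_id.const_mul_atBot_of_neg ha)

noncomputable def Faux (m c κt C σ ρ₀ γ ν p : ℝ) (μ : ℝ → ℝ) (x : ℝ) : ℝ :=
  m * Real.exp ((2*γ - ν) * x) + c * Real.exp ((2*γ+2) * x) - κt * Real.exp (2*γ*x)
    + C * (σ * Real.exp ((γ+1) * x) + ρ₀ * Real.exp ((γ+1-p) * x - μ x)) ^ 2

section lims
variable {m c κt C σ ρ₀ γ ν p : ℝ} {μ : ℝ → ℝ}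

private lemma inner_conv (hγ : 0 < γ) (hμ : Tendsto μ atBot (𝓝 0)) (hβ : γ + 1 - p = 0) :
    Tendsto (fun x => σ * Real.exp ((γ+1) * x) + ρ₀ * Real.exp ((γ+1-p) * x - μ x))
      atBot (𝓝 ρ₀) := by
  have h4 := expz (show (0:ℝ) < γ+1 by linarith)
  have h5 : Tendsto (fun x : ℝ => Real.exp ((γ+1-p)*x - μ x)) atBot (𝓝 1) := by
    have h : Tendsto (fun x : ℝ => (γ+1-p)*x - μ x) atBot (𝓝 0) := by
      simpa [hβ] using hμ.neg
    simpa [Function.comp_def] using (Real.continuous_exp.tendsto 0).comp h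
  simpa using (h4.const_mul σ).add (h5.const_mul ρ₀)

private lemma inner_zero (hγ : 0 < γ) (hμ : Tendsto μ atBot (𝓝 0)) (hβ : 0 < γ + 1 - p) :
    Tendsto (fun x => σ * Real.exp ((γ+1) * x) + ρ₀ * Real.exp ((γ+1-p) * x - μ x))
      atBot (𝓝 0) := by
  have h4 := expz (show (0:ℝ) < γ+1 by linarith)
  have h5 : Tendsto (fun x : ℝ => Real.exp ((γ+1-p)*x - μ x)) atBot (𝓝 0) := by
    have h : Tendsto (fun x : ℝ => (γ+1-p)*x - μ x) atBot atBot := by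
      have := (tendsto_id.const_mul_atBot hβ).atBot_add (by simpa using hμ.neg :
        Tendsto (fun x : ℝ => -μ x) atBot (𝓝 0))
      simpa [sub_eq_add_neg] using this
    exact Real.tendsto_exp_atBot.comp h
  simpa using (h4.const_mul σ).add (h5.const_mul ρ₀)

private lemma inner_top (hγ : 0 < γ) (hρ : 0 < ρ₀) (hμ : Tendsto μ atBot (𝓝 0))
    (hβ : γ + 1 - p < 0) :
    Tendsto (fun x => σ * Real.exp ((γ+1) * x) + ρ₀ * Real.exp ((γ+1-p) * x - μ x))
      atBot atTop := by
  have h4 := expz (show (0:ℝ) < γ+1 by linarith)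
  have h5 : Tendsto (fun x : ℝ => Real.exp ((γ+1-p)*x - μ x)) atBot atTop := by
    have h : Tendsto (fun x : ℝ => (γ+1-p)*x - μ x) atBot atTop := by
      have := (tendsto_id.const_mul_atBot_of_neg hβ).atTop_add (by simpa using hμ.neg :
        Tendsto (fun x : ℝ => -μ x) atBot (𝓝 0))
      simpa [sub_eq_add_neg] using this
    exact Real.tendsto_exp_atTop.comp h
  exact (h4.const_mul σ).add_atTop (h5.const_mul_atTop hρ)

private lemma rest_conv (hγ : 0 < γ) {L : ℝ}
    (hin : Tendsto (fun x => σ * Real.exp ((γ+1) * x) + ρ₀ * Real.exp ((γ+1-p) * x - μ x))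
      atBot (𝓝 L)) :
    Tendsto (fun x => c * Real.exp ((2*γ+2) * x) - κt * Real.exp (2*γ*x)
      + C * (σ * Real.exp ((γ+1) * x) + ρ₀ * Real.exp ((γ+1-p) * x - μ x)) ^ 2)
      atBot (𝓝 (C * L ^ 2)) := by
  have h2 := expz (show (0:ℝ) < 2*γ+2 by linarith)
  have h3 := expz (show (0:ℝ) < 2*γ by linarith)
  simpa using ((h2.const_mul c).sub (h3.const_mul κt)).add ((hin.pow 2).const_mul C)

lemma Faux_conv (hγ : 0 < γ) (hμ : Tendsto μ atBot (𝓝 0)) (hA : 0 < 2*γ - ν)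
    (hβ : γ + 1 - p = 0) :
    Tendsto (Faux m c κt C σ ρ₀ γ ν p μ) atBot (𝓝 (C * ρ₀ ^ 2)) := by
  have h1 := expz hA
  have h := (h1.const_mul m).add (rest_conv (c := c) (κt := κt) (C := C) hγ (inner_conv (σ := σ) (ρ₀ := ρ₀) hγ hμ hβ))
  rw [show m * 0 + C * ρ₀ ^ 2 = C * ρ₀ ^ 2 by ring] at h
  apply h.congr
  intro x
  simp only [Faux]
  ring

lemma Faux_zero (hγ : 0 < γ) (hμ : Tendsto μ atBot (𝓝 0)) (hA : 0 < 2*γ - ν)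
    (hβ : 0 < γ + 1 - p) :
    Tendsto (Faux m c κt C σ ρ₀ γ ν p μ) atBot (𝓝 0) := by
  have h1 := expz hA
  have h := (h1.const_mul m).add (rest_conv (c := c) (κt := κt) (C := C) hγ (inner_zero (σ := σ) (ρ₀ := ρ₀) hγ hμ hβ))
  rw [show m * 0 + C * 0 ^ 2 = 0 by ring] at h
  apply h.congr
  intro x
  simp only [Faux]
  ring

lemma Faux_topA (hm : 0 < m) (hγ : 0 < γ) (hμ : Tendsto μ atBot (𝓝 0)) (hA : 2*γ - ν < 0)
    {L : ℝ}
    (hin : Tendsto (fun x => σ * Real.exp ((γ+1) * x) + ρ₀ * Real.exp ((γ+1-p) * x - μ x))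
      atBot (𝓝 L)) :
    Tendsto (Faux m c κt C σ ρ₀ γ ν p μ) atBot atTop := by
  have h1 := (expt hA).const_mul_atTop hm
  have := h1.atTop_add (rest_conv (c := c) (κt := κt) (C := C) hγ hin)
  apply this.congr
  intro x
  simp only [Faux]
  ring

lemma Faux_topB (hm : 0 ≤ m) (hC : 0 < C) (hρ : 0 < ρ₀) (hγ : 0 < γ)
    (hμ : Tendsto μ atBot (𝓝 0)) (hβ : γ + 1 - p < 0) :
    Tendsto (Faux m c κt C σ ρ₀ γ ν p μ) atBot atTop := by
  have h2 := expz (show (0:ℝ) < 2*γ+2 by linarith)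
  have h3 := expz (show (0:ℝ) < 2*γ by linarith)
  have hsq : Tendsto (fun x => C * (σ * Real.exp ((γ+1) * x)
      + ρ₀ * Real.exp ((γ+1-p) * x - μ x)) ^ 2) atBot atTop :=
    ((tendsto_pow_atTop two_ne_zero).comp (inner_top hγ hρ hμ hβ)).const_mul_atTop hC
  have hrest : Tendsto (fun x => c * Real.exp ((2*γ+2) * x) - κt * Real.exp (2*γ*x))
      atBot (𝓝 (c * 0 - κt * 0)) := (h2.const_mul c).sub (h3.const_mul κt)
  have h := hrest.add_atTop hsq
  refine tendsto_atTop_mono (fun x => ?_) h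
  simp only [Faux]
  have := mul_nonneg hm (Real.exp_pos ((2*γ-ν)*x)).le
  nlinarith [sq_nonneg (σ * Real.exp ((γ+1) * x) + ρ₀ * Real.exp ((γ+1-p) * x - μ x))]

end lims

lemma Faux_alg (m c κt C σ ρ₀ γ ν p x : ℝ) (μ : ℝ → ℝ) :
    (m * Real.exp (-ν * x) + c * Real.exp (2 * x) - κt
        + C * (σ + ρ₀ * Real.exp (-p * x - μ x)) ^ 2 * Real.exp (2 * x))
      * Real.exp (2 * γ * x) = Faux m c κt C σ ρ₀ γ ν p μ x := by
  unfold Faux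
  rw [show (2*γ - ν) * x = (-ν*x) + (γ*x + γ*x) by ring,
    show (2*γ+2) * x = (x + x) + (γ*x + γ*x) by ring,
    show 2*γ*x = γ*x + γ*x by ring,
    show (γ+1) * x = x + γ*x by ring,
    show (γ+1-p) * x - μ x = (-p*x - μ x) + (x + γ*x) by ring,
    show (2:ℝ) * x = x + x by ring]
  simp only [Real.exp_add]
  ring


/-- For `γ > 0`, `γ ≠ (n-1)/2`, a brane scale function is of class (B) with constant
`γ` (i.e. `f'² e^{2γf}` converges to a positive limit as `τ → 0⁻`) iff
`γ = n + ω₀ - 1` and `ω₀ > -(n-1)/2`; in that case the mass is `(κ²/n²) ρ₀²`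
(and the tension `σ ∈ ℝ` is arbitrary). -/
theorem classB_gamma_noncritical
    (n : ℕ) (hn : 3 ≤ n)
    (m Λ κt κ σ ω₀ ρ₀ : ℝ)
    (hm : 0 < m) (hΛ : Λ ≤ 0)
    (hκt : κt = -1 ∨ κt = 0 ∨ κt = 1) (hΛκt : Λ = 0 → κt = 1)
    (hκ : κ ≠ 0) (hρ₀ : 0 < ρ₀)
    (lam μt : ℝ → ℝ)
    (hlam : ContDiff ℝ (⊤ : ℕ∞) lam)
    (hlam0 : Filter.Tendsto lam Filter.atBot (nhds 0))
    (hμt : ∀ t : ℝ, HasDerivAt μt (lam t) t)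
    (hμt0 : Filter.Tendsto μt Filter.atBot (nhds 0))
    (a : ℝ) (ha : 0 < a) (f : ℝ → ℝ)
    (hf : ContDiffOn ℝ (⊤ : ℕ∞) f (Set.Ioo (-a) 0))
    (hf' : ∀ τ ∈ Set.Ioo (-a) (0:ℝ), deriv f τ < 0)
    (hfb : Filter.Tendsto f (nhdsWithin 0 (Set.Iio 0)) Filter.atBot)
    (hFried : ∀ τ ∈ Set.Ioo (-a) (0:ℝ),
      (deriv f τ) ^ 2
        = m * Real.exp (-((n : ℝ) - 1) * f τ)
          + (2 * Λ / ((n : ℝ) * ((n : ℝ) + 1))) * Real.exp (2 * f τ) - κt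
          + (κ ^ 2 / (n : ℝ) ^ 2)
            * (σ + ρ₀ * Real.exp (-((n : ℝ) + ω₀) * f τ - μt (f τ))) ^ 2
            * Real.exp (2 * f τ))
    (γ : ℝ) (hγ : 0 < γ) (hγne : γ ≠ ((n : ℝ) - 1) / 2) :
    ((∃ mt : ℝ, 0 < mt
        ∧ Filter.Tendsto (fun τ => (deriv f τ) ^ 2 * Real.exp (2 * γ * f τ))
            (nhdsWithin 0 (Set.Iio 0)) (nhds mt))
      ↔ (γ = (n : ℝ) + ω₀ - 1 ∧ -((n : ℝ) - 1) / 2 < ω₀))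
    ∧ ((γ = (n : ℝ) + ω₀ - 1 ∧ -((n : ℝ) - 1) / 2 < ω₀) →
        Filter.Tendsto (fun τ => (deriv f τ) ^ 2 * Real.exp (2 * γ * f τ))
          (nhdsWithin 0 (Set.Iio 0)) (nhds (κ ^ 2 / (n : ℝ) ^ 2 * ρ₀ ^ 2))) := by
  have hn3 : (3:ℝ) ≤ (n:ℝ) := by exact_mod_cast hn
  have hCpos : 0 < κ ^ 2 / (n : ℝ) ^ 2 := by positivity
  set l := nhdsWithin (0:ℝ) (Set.Iio 0) with hl
  set c : ℝ := 2 * Λ / ((n : ℝ) * ((n : ℝ) + 1)) with hc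
  set C : ℝ := κ ^ 2 / (n : ℝ) ^ 2 with hCdef
  set ν : ℝ := (n : ℝ) - 1 with hν
  set p : ℝ := (n : ℝ) + ω₀ with hp
  have hEq : ∀ᶠ τ in l, (deriv f τ) ^ 2 * Real.exp (2 * γ * f τ)
      = Faux m c κt C σ ρ₀ γ ν p μt (f τ) := by
    have h1 : ∀ᶠ τ in l, -a < τ :=
      eventually_nhdsWithin_of_eventually_nhds (eventually_gt_nhds (by linarith))
    have h2 : ∀ᶠ τ in l, τ ∈ Set.Iio (0:ℝ) := eventually_mem_nhdsWithin
    filter_upwards [h1, h2] with τ ha1 ha2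
    rw [hFried τ ⟨ha1, ha2⟩]
    exact Faux_alg m c κt C σ ρ₀ γ ν p (f τ) μt
  have hEq' : (fun τ => Faux m c κt C σ ρ₀ γ ν p μt (f τ))
      =ᶠ[l] (fun τ => (deriv f τ) ^ 2 * Real.exp (2 * γ * f τ)) :=
    (hEq.mono fun τ h => h.symm)
  have hAne : 2 * γ - ν ≠ 0 := fun h => hγne (by rw [hν] at h; linarith)
  have hconv : (γ = (n : ℝ) + ω₀ - 1 ∧ -((n : ℝ) - 1) / 2 < ω₀) →
      Filter.Tendsto (fun τ => (deriv f τ) ^ 2 * Real.exp (2 * γ * f τ)) l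
        (nhds (C * ρ₀ ^ 2)) := by
    rintro ⟨h1, h2⟩
    have hb : γ + 1 - p = 0 := by rw [hp]; linarith
    have hA : 0 < 2 * γ - ν := by rw [hν]; linarith
    exact Filter.Tendsto.congr' hEq'
      ((Faux_conv (m := m) (c := c) (κt := κt) (C := C) (σ := σ) (ρ₀ := ρ₀)
        hγ hμt0 hA hb).comp hfb)
  refine ⟨⟨?_, fun h => ⟨C * ρ₀ ^ 2, by positivity, hconv h⟩⟩, hconv⟩
  rintro ⟨mt, hmt, hT⟩
  have hT' : Filter.Tendsto (fun τ => Faux m c κt C σ ρ₀ γ ν p μt (f τ)) l (nhds mt) :=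
    Filter.Tendsto.congr' (hEq.mono fun τ h => h) hT
  rcases lt_trichotomy (γ + 1 - p) 0 with hb | hb | hb
  · exact absurd hT' (not_tendsto_nhds_of_tendsto_atTop
      ((Faux_topB (m := m) (c := c) (κt := κt) (σ := σ)
        hm.le hCpos hρ₀ hγ hμt0 hb).comp hfb) mt)
  · rcases lt_or_gt_of_ne hAne with hA | hA
    · exact absurd hT' (not_tendsto_nhds_of_tendsto_atTop
        ((Faux_topA (c := c) (κt := κt) (C := C)
          hm hγ hμt0 hA (inner_conv (σ := σ) (ρ₀ := ρ₀) hγ hμt0 hb)).comp hfb) mt)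
    · constructor
      · rw [hp] at hb; linarith
      · rw [hp] at hb; rw [hν] at hA; linarith
  · rcases lt_or_gt_of_ne hAne with hA | hA
    · exact absurd hT' (not_tendsto_nhds_of_tendsto_atTop
        ((Faux_topA (c := c) (κt := κt) (C := C)
          hm hγ hμt0 hA (inner_zero (σ := σ) (ρ₀ := ρ₀) hγ hμt0 hb)).comp hfb) mt)
    · have h0 := tendsto_nhds_unique hT'
        ((Faux_zero (m := m) (c := c) (κt := κt) (C := C) (σ := σ) (ρ₀ := ρ₀)
          hγ hμt0 hA hb).comp hfb)
      exact absurd h0 hmt.ne'
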